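/- Let P be a set of n points in ℝ^d, let f, g, h : P × ℝ^d → [0,∞), let z > 0, and let c₁, c₂ > 0 satisfy c₁(g(p,x)^z + h(p,x)^z) ≤ f(p,x) ≤ c₂(g(p,x)^z + h(p,x)^z) for every p ∈ P and x ∈ ℝ^d. Assume g(p, b·x) = b·g(p,x) for every p ∈ P, x ∈ ℝ^d and b > 0, and h(p,x)^z ≤ (2/n)·∑_{q∈P} h(q,x)^z for every p ∈ P and x ∈ ℝ^d. Let D be a d×d diagonal matrix with nonnegative entries and V a d×d orthogonal matrix such that DVᵀ is invertible and for every x ∈ ℝ^d, c₁(‖DVᵀx‖₂^z + ∑_{q∈P} h(q,x)^z) ≤ ∑_{q∈P} f(q,x). Let α > 0 be such that ∑_{q∈P} g(q,x)^{max{1,z}} ≤ (α·‖DVᵀx‖₂)^{max{1,z}} for every x ∈ ℝ^d. Suppose there exist d unit vectors v₁,…,v_d ∈ ℝ^d and c > 0 such that for every unit vector y ∈ ℝ^d and every p ∈ P, g(p,(DVᵀ)⁻¹y)^z ≤ c·∑_{j=1}^d g(p,(DVᵀ)⁻¹v_j)^z. Then the total sensitivity satisfies ∑_{p∈P} [2c₂/(c₁n)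 + (c·c₂/c₁)·∑_{j=1}^d g(p,(DVᵀ)⁻¹v_j)^z] ≤ 2c₂/c₁ + (c·c₂/c₁)·max{n^{1−z}, 1}·α^z·d; in particular the sum over p ∈ P of the sensitivities sup_{x : ∑_{q∈P} f(q,x) > 0} f(p,x)/∑_{q∈P} f(q,x) is at most 2c₂/c₁ + (c·c₂/c₁)·max{n^{1−z}, 1}·α^z·d. -/

import Mathlib

open Matrix

/-- The Euclidean (`ℓ₂`) norm of a vector in `ℝ^d`. -/
noncomputable def l2 {d : ℕ} (x : Fin d → ℝ) : ℝ := Real.sqrt (∑ i, x i ^ 2)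

lemma l2_nonneg {d : ℕ} (x : Fin d → ℝ) : 0 ≤ l2 x := Real.sqrt_nonneg _

lemma l2_smul {d : ℕ} (a : ℝ) (ha : 0 ≤ a) (x : Fin d → ℝ) : l2 (a • x) = a * l2 x := by
  unfold l2
  have : ∑ i, (a • x) i ^ 2 = a ^ 2 * ∑ i, x i ^ 2 := by
    rw [Finset.mul_sum]; exact Finset.sum_congr rfl fun i _ => by simp [mul_pow]
  rw [this, Real.sqrt_mul (sq_nonneg a), Real.sqrt_sq ha]

lemma l2_eq_zero {d : ℕ} {x : Fin d → ℝ} (h : l2 x = 0) : x = 0 := by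
  unfold l2 at h
  have hnn : (0:ℝ) ≤ ∑ i, x i ^ 2 := Finset.sum_nonneg fun i _ => sq_nonneg _
  have hs : ∑ i, x i ^ 2 = 0 := le_antisymm (Real.sqrt_eq_zero'.mp h) hnn
  funext i
  have := (Finset.sum_eq_zero_iff_of_nonneg (fun i _ => sq_nonneg (x i))).mp hs i
    (Finset.mem_univ i)
  simpa using sq_eq_zero_iff.mp this

/-- Power-mean inequality: for `0 < z ≤ 1`, `∑ aᵢ^z ≤ |s|^(1-z) (∑ aᵢ)^z`. -/
lemma sum_rpow_le {ι : Type*} (s : Finset ι) (f : ι → ℝ) (hf : ∀ i ∈ s, 0 ≤ f i)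
    {z : ℝ} (hz : 0 < z) (hz1 : z ≤ 1) :
    ∑ i ∈ s, f i ^ z ≤ (s.card : ℝ) ^ (1 - z) * (∑ i ∈ s, f i) ^ z := by
  classical
  set F : ι → ℝ := fun i => if i ∈ s then f i else 0 with hF
  have hF0 : ∀ i, 0 ≤ F i := fun i => by by_cases h : i ∈ s <;> simp [hF, h, hf i]
  have h := Real.inner_le_weight_mul_Lp_of_nonneg s (p := z⁻¹)
    (by rw [le_inv_comm₀] <;> simp [hz, hz1]) 1 (fun i => F i ^ z)
    (fun _ => zero_le_one) (fun i => Real.rpow_nonneg (hF0 i) z)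
  simp only [one_mul, inv_inv] at h
  calc ∑ i ∈ s, f i ^ z = ∑ i ∈ s, F i ^ z := Finset.sum_congr rfl fun i hi => by simp [hF, hi]
    _ ≤ (∑ i ∈ s, (1:ℝ)) ^ (1 - (z⁻¹)⁻¹) * (∑ i ∈ s, (F i ^ z) ^ z⁻¹) ^ z⁻¹⁻¹ := by simpa using h
    _ = (s.card : ℝ) ^ (1 - z) * (∑ i ∈ s, f i) ^ z := by
        rw [inv_inv]
        congr 2
        · simp
        · exact Finset.sum_congr rfl fun i hi => by
            rw [Real.rpow_rpow_inv (hF0 i) hz.ne']; simp [hF, hi]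

/-- Total sensitivity bound for near-convex functions: under the `f`-SVD assumptions,
the sum over `p ∈ P` of the sensitivity upper bounds
`2c₂/(c₁ n) + (c c₂/c₁) ∑_j g(p, (DVᵀ)⁻¹ v_j)^z` is at most
`2c₂/c₁ + (c c₂/c₁)·max{n^(1−z),1}·α^z·d`; in particular the total sensitivity is at
most this bound as well. -/
theorem total_sensitivity_bound {d n : ℕ} (P : Finset (Fin d → ℝ)) (hcard : P.card = n)
    (f g h : (Fin d → ℝ) → (Fin d → ℝ) → ℝ)
    (hf0 : ∀ p ∈ P, ∀ x, 0 ≤ f p x) (hg0 : ∀ p ∈ P, ∀ x, 0 ≤ g p x)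
    (hh0 : ∀ p ∈ P, ∀ x, 0 ≤ h p x)
    (z c₁ c₂ : ℝ) (hz : 0 < z) (hc₁ : 0 < c₁) (hc₂ : 0 < c₂)
    (hsand : ∀ p ∈ P, ∀ x, c₁ * (g p x ^ z + h p x ^ z) ≤ f p x ∧
      f p x ≤ c₂ * (g p x ^ z + h p x ^ z))
    (hghom : ∀ p ∈ P, ∀ x, ∀ b : ℝ, 0 < b → g p (b • x) = b * g p x)
    (hhsmall : ∀ p ∈ P, ∀ x, h p x ^ z ≤ (2 / (n : ℝ)) * ∑ q ∈ P, h q x ^ z)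
    (D V : Matrix (Fin d) (Fin d) ℝ) (hD : D.IsDiag) (hDnn : ∀ i, 0 ≤ D i i)
    (hV : Vᵀ * V = 1 ∧ V * Vᵀ = 1) (hinv : IsUnit (D * Vᵀ))
    (hlow : ∀ x, c₁ * (l2 ((D * Vᵀ).mulVec x) ^ z + ∑ q ∈ P, h q x ^ z) ≤ ∑ q ∈ P, f q x)
    (α : ℝ) (hα : 0 < α)
    (hup : ∀ x, ∑ q ∈ P, g q x ^ max 1 z ≤ (α * l2 ((D * Vᵀ).mulVec x)) ^ max 1 z)
    (v : Fin d → Fin d → ℝ) (hv : ∀ j, l2 (v j) = 1) (c : ℝ) (hc : 0 < c)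
    (hcv : ∀ y : Fin d → ℝ, l2 y = 1 → ∀ p ∈ P,
      g p ((D * Vᵀ)⁻¹.mulVec y) ^ z ≤ c * ∑ j, g p ((D * Vᵀ)⁻¹.mulVec (v j)) ^ z) :
    (∑ p ∈ P, (2 * c₂ / (c₁ * n) +
        (c * c₂ / c₁) * ∑ j, g p ((D * Vᵀ)⁻¹.mulVec (v j)) ^ z) ≤
      2 * c₂ / c₁ + (c * c₂ / c₁) * max ((n : ℝ) ^ (1 - z)) 1 * α ^ z * d) ∧
    (∑ p ∈ P, (⨆ x : {x : Fin d → ℝ // 0 < ∑ q ∈ P, f q x},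
        f p (x : Fin d → ℝ) / ∑ q ∈ P, f q (x : Fin d → ℝ)) ≤
      2 * c₂ / c₁ + (c * c₂ / c₁) * max ((n : ℝ) ^ (1 - z)) 1 * α ^ z * d) := by
  classical
  have hmax0 : (0:ℝ) ≤ max ((n : ℝ) ^ (1 - z)) 1 := le_trans zero_le_one (le_max_right _ _)
  have hRHS0 : (0:ℝ) ≤ 2 * c₂ / c₁ + (c * c₂ / c₁) * max ((n : ℝ) ^ (1 - z)) 1 * α ^ z * d := by
    have h1 : (0:ℝ) ≤ 2 * c₂ / c₁ := by positivity
    have h2 : (0:ℝ) ≤ (c * c₂ / c₁) * max ((n : ℝ) ^ (1 - z)) 1 * α ^ z * d := by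
      have : (0:ℝ) ≤ α ^ z := Real.rpow_nonneg hα.le z
      have hB : (0:ℝ) ≤ c * c₂ / c₁ := by positivity
      have : (0:ℝ) ≤ (c * c₂ / c₁) * max ((n : ℝ) ^ (1 - z)) 1 * α ^ z :=
        mul_nonneg (mul_nonneg hB hmax0) this
      exact mul_nonneg this (Nat.cast_nonneg d)
    linarith
  rcases Nat.eq_zero_or_pos n with hn0 | hn
  · have hP : P = ∅ := Finset.card_eq_zero.mp (hcard.trans hn0)
    subst hP
    constructor <;> simpa using hRHS0
  have hnR : (0:ℝ) < n := by exact_mod_cast hn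
  have hMdet : IsUnit (D * Vᵀ).det := (Matrix.isUnit_iff_isUnit_det _).mp hinv
  have hMl : (D * Vᵀ)⁻¹ * (D * Vᵀ) = 1 := Matrix.nonsing_inv_mul _ hMdet
  have hMr : (D * Vᵀ) * (D * Vᵀ)⁻¹ = 1 := Matrix.mul_nonsing_inv _ hMdet
  set G : (Fin d → ℝ) → ℝ := fun p => ∑ j, g p ((D * Vᵀ)⁻¹.mulVec (v j)) ^ z with hGdef
  have hG0 : ∀ p ∈ P, 0 ≤ G p := fun p hp =>
    Finset.sum_nonneg fun j _ => Real.rpow_nonneg (hg0 p hp _) z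
  have hαz : (0:ℝ) ≤ α ^ z := Real.rpow_nonneg hα.le z
  -- per-direction bound
  have key : ∀ j, ∑ p ∈ P, g p ((D * Vᵀ)⁻¹.mulVec (v j)) ^ z ≤
      max ((n : ℝ) ^ (1 - z)) 1 * α ^ z := by
    intro j
    set x := (D * Vᵀ)⁻¹.mulVec (v j) with hx
    have hMx : (D * Vᵀ).mulVec x = v j := by
      rw [hx, Matrix.mulVec_mulVec, hMr, Matrix.one_mulVec]
    have hupx := hup x
    rw [hMx, hv j, mul_one] at hupx
    rcases le_total 1 z with hz1 | hz1
    · rw [max_eq_right hz1] at hupx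
      calc ∑ p ∈ P, g p x ^ z ≤ α ^ z := hupx
        _ ≤ max ((n : ℝ) ^ (1 - z)) 1 * α ^ z := by
            nlinarith [le_max_right ((n : ℝ) ^ (1 - z)) 1]
    · rw [max_eq_left hz1] at hupx
      simp only [Real.rpow_one] at hupx
      have hsum0 : (0:ℝ) ≤ ∑ q ∈ P, g q x := Finset.sum_nonneg fun q hq => hg0 q hq x
      calc ∑ p ∈ P, g p x ^ z
          ≤ (P.card : ℝ) ^ (1 - z) * (∑ p ∈ P, g p x) ^ z :=
            sum_rpow_le P (fun p => g p x) (fun p hp => hg0 p hp x) hz hz1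
        _ ≤ ((n : ℝ) ^ (1 - z)) * α ^ z := by
            rw [hcard]
            exact mul_le_mul_of_nonneg_left (Real.rpow_le_rpow hsum0 hupx hz.le)
              (Real.rpow_nonneg (Nat.cast_nonneg n) _)
        _ ≤ max ((n : ℝ) ^ (1 - z)) 1 * α ^ z :=
            mul_le_mul_of_nonneg_right (le_max_left _ _) hαz
  -- part 1
  have part1 : ∑ p ∈ P, (2 * c₂ / (c₁ * n) + (c * c₂ / c₁) * G p) ≤
      2 * c₂ / c₁ + (c * c₂ / c₁) * max ((n : ℝ) ^ (1 - z)) 1 * α ^ z * d := by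
    rw [Finset.sum_add_distrib, Finset.sum_const, hcard, ← Finset.mul_sum]
    have e1 : n • (2 * c₂ / (c₁ * (n:ℝ))) = 2 * c₂ / c₁ := by
      rw [nsmul_eq_mul]; field_simp
    have e2 : ∑ p ∈ P, G p ≤ max ((n : ℝ) ^ (1 - z)) 1 * α ^ z * d := by
      rw [hGdef]
      rw [Finset.sum_comm]
      calc ∑ j : Fin d, ∑ p ∈ P, g p ((D * Vᵀ)⁻¹.mulVec (v j)) ^ z
          ≤ ∑ _j : Fin d, max ((n : ℝ) ^ (1 - z)) 1 * α ^ z :=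
            Finset.sum_le_sum fun j _ => key j
        _ = max ((n : ℝ) ^ (1 - z)) 1 * α ^ z * d := by
            simp [Finset.sum_const, mul_comm]
    have hB : (0:ℝ) ≤ c * c₂ / c₁ := by positivity
    have := mul_le_mul_of_nonneg_left e2 hB
    rw [e1]
    linarith [this]
  refine ⟨part1, ?_⟩
  -- part 2: pointwise sensitivity bound
  have sens : ∀ p ∈ P, ∀ x : Fin d → ℝ, 0 < ∑ q ∈ P, f q x →
      f p x / ∑ q ∈ P, f q x ≤ 2 * c₂ / (c₁ * n) + (c * c₂ / c₁) * G p := by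
    intro p hp x hF
    set F := ∑ q ∈ P, f q x with hFdef
    set s := l2 ((D * Vᵀ).mulVec x) with hs
    have hs0 : 0 ≤ s := l2_nonneg _
    have hH0 : (0:ℝ) ≤ ∑ q ∈ P, h q x ^ z :=
      Finset.sum_nonneg fun q hq => Real.rpow_nonneg (hh0 q hq x) z
    have hsz0 : (0:ℝ) ≤ s ^ z := Real.rpow_nonneg hs0 z
    have hlowx := hlow x
    have hH : ∑ q ∈ P, h q x ^ z ≤ F / c₁ := by
      rw [le_div_iff₀ hc₁]; nlinarith
    have hszF : s ^ z ≤ F / c₁ := by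
      rw [le_div_iff₀ hc₁]; nlinarith
    -- bound on g p x ^ z
    have hgx : g p x ^ z ≤ (F / c₁) * (c * G p) := by
      rcases eq_or_lt_of_le hs0 with hs0' | hspos
      · -- s = 0 : x = 0 and g p 0 = 0
        have hMx0 : (D * Vᵀ).mulVec x = 0 := l2_eq_zero hs0'.symm
        have hx0 : x = 0 := by
          have : ((D * Vᵀ)⁻¹ * (D * Vᵀ)).mulVec x = (D * Vᵀ)⁻¹.mulVec 0 := by
            rw [← Matrix.mulVec_mulVec, hMx0]
          rw [hMl, Matrix.one_mulVec, Matrix.mulVec_zero] at this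
          exact this
        have hg00 : g p x = 0 := by
          have h2 := hghom p hp x 2 (by norm_num)
          have : (2:ℝ) • x = x := by rw [hx0]; simp
          rw [this] at h2
          linarith
        rw [hg00, Real.zero_rpow hz.ne']
        have : (0:ℝ) ≤ F / c₁ := by positivity
        exact mul_nonneg this (mul_nonneg hc.le (hG0 p hp))
      · -- s > 0
        set y := s⁻¹ • ((D * Vᵀ).mulVec x) with hy
        have hly : l2 y = 1 := by
          rw [hy, l2_smul _ (inv_nonneg.mpr hs0) _, ← hs, inv_mul_cancel₀ hspos.ne']
        have hMy : (D * Vᵀ)⁻¹.mulVec y = s⁻¹ • x := by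
          rw [hy, Matrix.mulVec_smul, Matrix.mulVec_mulVec, hMl, Matrix.one_mulVec]
        have hcvy := hcv y hly p hp
        rw [hMy] at hcvy
        have hgsx : g p x = s * g p (s⁻¹ • x) := by
          have := hghom p hp (s⁻¹ • x) s hspos
          rw [smul_smul, mul_inv_cancel₀ hspos.ne', one_smul] at this
          exact this
        have hg' : 0 ≤ g p (s⁻¹ • x) := hg0 p hp _
        calc g p x ^ z = s ^ z * g p (s⁻¹ • x) ^ z := by
              rw [hgsx, Real.mul_rpow hs0 hg']
          _ ≤ (F / c₁) * (c * G p) :=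
              mul_le_mul hszF hcvy (Real.rpow_nonneg hg' z) (by positivity)
    have hfx := (hsand p hp x).2
    have hhx : h p x ^ z ≤ (2 / (n:ℝ)) * (F / c₁) := by
      calc h p x ^ z ≤ (2 / (n:ℝ)) * ∑ q ∈ P, h q x ^ z := hhsmall p hp x
        _ ≤ (2 / (n:ℝ)) * (F / c₁) :=
            mul_le_mul_of_nonneg_left hH (by positivity)
    rw [div_le_iff₀ hF]
    have hGp := hG0 p hp
    calc f p x ≤ c₂ * (g p x ^ z + h p x ^ z) := hfx
      _ ≤ c₂ * ((F / c₁) * (c * G p) + (2 / (n:ℝ)) * (F / c₁)) := by nlinarith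
      _ = (2 * c₂ / (c₁ * n) + (c * c₂ / c₁) * G p) * F := by field_simp; ring
  -- sum up the suprema
  have hsup : ∀ p ∈ P,
      (⨆ x : {x : Fin d → ℝ // 0 < ∑ q ∈ P, f q x},
        f p (x : Fin d → ℝ) / ∑ q ∈ P, f q (x : Fin d → ℝ)) ≤
      2 * c₂ / (c₁ * n) + (c * c₂ / c₁) * G p := by
    intro p hp
    apply Real.iSup_le
    · intro x
      exact sens p hp x.1 x.2
    · have := hG0 p hp
      positivity
  calc ∑ p ∈ P, (⨆ x : {x : Fin d → ℝ // 0 < ∑ q ∈ P, f q x},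
        f p (x : Fin d → ℝ) / ∑ q ∈ P, f q (x : Fin d → ℝ))
      ≤ ∑ p ∈ P, (2 * c₂ / (c₁ * n) + (c * c₂ / c₁) * G p) :=
        Finset.sum_le_sum hsup
    _ ≤ _ := part1
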